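/- Fix $n\geq 1$, $\hbar>0$, $\rho>0$. Let $\mathcal{A}$ be the unital $*$-algebra generated by $z_1,\dots,z_n,z_1^*,\dots,z_n^*$ with relations $[z_i,z_j]=0$, $[z_i^*,z_j^*]=0$, $[z_i^*,z_j]=\hbar\delta_{ij}$, and let $\int_\rho:\mathcal{A}\to\mathbb{C}$ be the linear functional defined on the normal-ordered basis by $\int_\rho \prod_i z_i^{k_i}\prod_i (z_i^*)^{l_i}=\prod_i \delta_{k_i,l_i}\, k_i!\,\rho^{k_i}$. Then for all $a\in\mathcal{A}$ and all $i$: $\int_\rho z_i\cdot a = \frac{\rho}{\rho+\hbar}\int_\rho a\cdot z_i$. -/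

import Mathlib

/-- In the `*`-algebra generated by `z₁,…,z_n, z₁*,…,z_n*` with
`[zᵢ,zⱼ]=[zᵢ*,zⱼ*]=0`, `[zᵢ*,zⱼ]=ℏδᵢⱼ` (normal-ordered monomials forming a ℂ-basis), the state
`∫_ρ` determined by `∫_ρ ∏ zᵢ^{kᵢ} ∏ (zᵢ*)^{lᵢ} = ∏ δ_{kᵢ,lᵢ} kᵢ! ρ^{kᵢ}` satisfies
`∫_ρ zᵢ·a = (ρ/(ρ+ℏ)) ∫_ρ a·zᵢ` for all `a` and `i`. -/
theorem stmt_15 (n : ℕ) (hn : 1 ≤ n) (ℏ ρ : ℝ) (hℏ : 0 < ℏ) (hρ : 0 < ρ)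
    (A : Type) [Ring A] [Algebra ℂ A] [StarRing A] [StarModule ℂ A]
    (z : Fin n → A)
    (hcomm : ∀ i j, z i * z j = z j * z i)
    (hscomm : ∀ i j, star (z i) * star (z j) = star (z j) * star (z i))
    (hccr : ∀ i j, star (z i) * z j - z j * star (z i)
        = if i = j then algebraMap ℂ A ((ℏ : ℝ) : ℂ) else 0)
    (mono : (Fin n → ℕ) → (Fin n → ℕ) → A)
    (hmono : ∀ k l, mono k l =
      (((List.finRange n).map fun i => z i ^ k i).prod) *
        (((List.finRange n).map fun i => (star (z i)) ^ l i).prod))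
    (b : Module.Basis ((Fin n → ℕ) × (Fin n → ℕ)) ℂ A)
    (hb : ∀ kl, b kl = mono kl.1 kl.2)
    (I : A →ₗ[ℂ] ℂ)
    (hI : ∀ k l : Fin n → ℕ, I (mono k l) =
      if k = l then ∏ i, ((Nat.factorial (k i) : ℂ) * ((ρ : ℝ) : ℂ) ^ (k i)) else 0) :
    ∀ (a : A) (i : Fin n), I (z i * a) = (((ρ / (ρ + ℏ) : ℝ)) : ℂ) * I (a * z i) := by
  classical
  intro a i
  have hρℏ : ((ρ : ℂ) + (ℏ : ℂ)) ≠ 0 := by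
    have h0 : (0:ℝ) < ρ + ℏ := by linarith
    rw [← Complex.ofReal_add]
    exact_mod_cast ne_of_gt h0
  -- basic commutation facts
  have hC1 : ∀ p q : Fin n, Commute (z p) (z q) := fun p q => hcomm p q
  have hC2 : ∀ p q : Fin n, Commute (star (z p)) (star (z q)) := fun p q => hscomm p q
  have hC3 : ∀ p q : Fin n, p ≠ q → Commute (z q) (star (z p)) := by
    intro p q hpq
    have h := hccr p q
    rw [if_neg hpq] at h
    exact (sub_eq_zero.mp h).symm
  have pz : ∀ k : Fin n → ℕ, ((Finset.univ : Finset (Fin n)) : Set (Fin n)).Pairwise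
      (Function.onFun Commute fun j => z j ^ k j) :=
    fun k p _ q _ _ => (hC1 p q).pow_pow _ _
  have ps : ∀ l : Fin n → ℕ, ((Finset.univ : Finset (Fin n)) : Set (Fin n)).Pairwise
      (Function.onFun Commute fun j => star (z j) ^ l j) :=
    fun l p _ q _ _ => (hC2 p q).pow_pow _ _
  have pz' : ∀ k : Fin n → ℕ, ((Finset.univ.erase i : Finset (Fin n)) : Set (Fin n)).Pairwise
      (Function.onFun Commute fun j => z j ^ k j) :=
    fun k => (pz k).mono (by intro x hx; simp)
  have ps' : ∀ l : Fin n → ℕ, ((Finset.univ.erase i : Finset (Fin n)) : Set (Fin n)).Pairwise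
      (Function.onFun Commute fun j => star (z j) ^ l j) :=
    fun l => (ps l).mono (by intro x hx; simp)
  have hlist : ∀ (f : Fin n → A)
      (h : ((Finset.univ : Finset (Fin n)) : Set (Fin n)).Pairwise (Function.onFun Commute f)),
      ((List.finRange n).map f).prod = Finset.univ.noncommProd f h := by
    intro f h
    rw [Finset.noncommProd]
    have e : (Finset.univ : Finset (Fin n)).1 = ↑(List.finRange n) := by rw [Fin.univ_def]
    simp_rw [e, Multiset.map_coe, Multiset.noncommProd_coe]
  set Zp : (Fin n → ℕ) → A := fun k => Finset.univ.noncommProd (fun j => z j ^ k j) (pz k)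
    with hZpdef
  set Sp : (Fin n → ℕ) → A := fun l => Finset.univ.noncommProd (fun j => star (z j) ^ l j) (ps l)
    with hSpdef
  have hmono' : ∀ k l, mono k l = Zp k * Sp l := by
    intro k l
    rw [hmono, hlist _ (pz k), hlist _ (ps l)]
  -- splitting lemmas
  have hsplitZ : ∀ (k : Fin n → ℕ) (v : ℕ),
      Zp (Function.update k i v) = z i ^ v *
        (Finset.univ.erase i).noncommProd (fun j => z j ^ k j) (pz' k) := by
    intro k v
    calc Zp (Function.update k i v)
        = (fun j => z j ^ Function.update k i v j) i *
          (Finset.univ.erase i).noncommProd (fun j => z j ^ Function.update k i v j) (pz' _) :=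
          (Finset.mul_noncommProd_erase Finset.univ (Finset.mem_univ i) _ _).symm
      _ = z i ^ v * (Finset.univ.erase i).noncommProd (fun j => z j ^ k j) (pz' k) := by
          congr 1
          · simp
          · exact Finset.noncommProd_congr rfl
              (fun x hx => by rw [Function.update_of_ne (Finset.ne_of_mem_erase hx)]) _
  have hsplitS : ∀ (l : Fin n → ℕ) (v : ℕ),
      Sp (Function.update l i v) =
        (Finset.univ.erase i).noncommProd (fun j => star (z j) ^ l j) (ps' l) * star (z i) ^ v := by
    intro l v
    calc Sp (Function.update l i v)
        = (Finset.univ.erase i).noncommProd (fun j => star (z j) ^ Function.update l i v j) (ps' _)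
            * (fun j => star (z j) ^ Function.update l i v j) i :=
          (Finset.noncommProd_erase_mul Finset.univ (Finset.mem_univ i) _ _).symm
      _ = _ := by
          congr 1
          · exact Finset.noncommProd_congr rfl
              (fun x hx => by rw [Function.update_of_ne (Finset.ne_of_mem_erase hx)]) _
          · simp
  -- z i commutes with products
  have hcommZ : ∀ k : Fin n → ℕ, Commute (z i) (Zp k) :=
    fun k => Finset.noncommProd_commute _ _ _ _ (fun x _ => (hC1 i x).pow_right _)
  have hcommSE : ∀ l : Fin n → ℕ,
      Commute (z i) ((Finset.univ.erase i).noncommProd (fun j => star (z j) ^ l j) (ps' l)) :=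
    fun l => Finset.noncommProd_commute _ _ _ _
      (fun x hx => ((hC3 x i (Finset.mem_erase.mp hx).1).pow_right _))
  -- CCR and its powers
  have hccr' : star (z i) * z i = z i * star (z i) + (ℏ : ℂ) • (1 : A) := by
    have h := hccr i i
    rw [if_pos rfl, Algebra.algebraMap_eq_smul_one] at h
    exact sub_eq_iff_eq_add'.mp h
  have hpowS : ∀ m : ℕ, star (z i) ^ (m + 1) * z i
      = z i * star (z i) ^ (m + 1) + (((m : ℂ) + 1) * (ℏ : ℂ)) • star (z i) ^ m := by
    intro m
    induction m with
    | zero => simpa using hccr'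
    | succ m ih =>
      have h1 : star (z i) ^ (m + 2) * z i = star (z i) ^ (m + 1) * (star (z i) * z i) := by
        rw [pow_succ, mul_assoc]
      rw [h1, hccr', mul_add, ← mul_assoc, ih]
      simp only [add_mul, smul_mul_assoc, mul_assoc, ← pow_succ, mul_smul_comm, mul_one]
      push_cast
      module
  have hpow : ∀ m : ℕ, star (z i) ^ m * z i
      = z i * star (z i) ^ m + ((m : ℂ) * (ℏ : ℂ)) • star (z i) ^ (m - 1) := by
    intro m
    cases m with
    | zero => simp
    | succ m => simpa [add_mul] using hpowS m
  -- product recursions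
  have hZmul : ∀ k : Fin n → ℕ, z i * Zp k = Zp (Function.update k i (k i + 1)) := by
    intro k
    rw [hsplitZ k (k i + 1)]
    conv_lhs => rw [show Zp k = Zp (Function.update k i (k i)) by rw [Function.update_eq_self]]
    rw [hsplitZ k (k i), ← mul_assoc, ← pow_succ']
  have hSmul : ∀ l : Fin n → ℕ, Sp l * z i
      = z i * Sp l + ((l i : ℂ) * (ℏ : ℂ)) • Sp (Function.update l i (l i - 1)) := by
    intro l
    have e1 : Sp l = (Finset.univ.erase i).noncommProd (fun j => star (z j) ^ l j) (ps' l)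
        * star (z i) ^ (l i) := by
      conv_lhs => rw [show Sp l = Sp (Function.update l i (l i)) by rw [Function.update_eq_self]]
      exact hsplitS l (l i)
    rw [e1, mul_assoc, hpow, mul_add, mul_smul_comm, ← mul_assoc, ← (hcommSE l).eq, mul_assoc,
      ← e1, ← hsplitS l (l i - 1)]
  have hMul1 : ∀ k l : Fin n → ℕ, z i * mono k l = mono (Function.update k i (k i + 1)) l := by
    intro k l
    rw [hmono', hmono', ← mul_assoc, hZmul]
  have hMul2 : ∀ k l : Fin n → ℕ, mono k l * z i
      = mono (Function.update k i (k i + 1)) l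
        + ((l i : ℂ) * (ℏ : ℂ)) • mono k (Function.update l i (l i - 1)) := by
    intro k l
    rw [hmono', mul_assoc, hSmul, mul_add, mul_smul_comm, ← mul_assoc, ← (hcommZ k).eq,
      hZmul, ← hmono', ← hmono']
  -- key scalar computation
  have key : ∀ k l : Fin n → ℕ,
      I (z i * mono k l) = (((ρ / (ρ + ℏ) : ℝ)) : ℂ) * I (mono k l * z i) := by
    intro k l
    rw [hMul1, hMul2, map_add, map_smul, hI, hI]
    by_cases h1 : Function.update k i (k i + 1) = l
    · have hli : l i = k i + 1 := by rw [← h1]; simp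
      have hl' : k = Function.update l i (l i - 1) := by
        funext j
        by_cases hj : j = i
        · subst hj; simp [hli]
        · rw [Function.update_of_ne hj, ← h1, Function.update_of_ne hj]
      rw [if_pos h1, if_pos hl']
      have hP : (∏ j, ((Nat.factorial (Function.update k i (k i + 1) j) : ℂ)
            * ((ρ : ℝ) : ℂ) ^ (Function.update k i (k i + 1) j)))
          = ((k i : ℂ) + 1) * (ρ : ℂ)
            * ∏ j, ((Nat.factorial (k j) : ℂ) * ((ρ : ℝ) : ℂ) ^ (k j)) := by
        have e2 : (fun j => ((Nat.factorial (Function.update k i (k i + 1) j) : ℂ)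
              * ((ρ : ℝ) : ℂ) ^ (Function.update k i (k i + 1) j)))
            = Function.update (fun j => ((Nat.factorial (k j) : ℂ) * ((ρ : ℝ) : ℂ) ^ (k j))) i
                ((Nat.factorial (k i + 1) : ℂ) * ((ρ : ℝ) : ℂ) ^ (k i + 1)) := by
          funext j
          by_cases hj : j = i
          · subst hj; simp
          · rw [Function.update_of_ne hj, Function.update_of_ne hj]
        rw [e2, Finset.prod_update_of_mem (Finset.mem_univ i), Finset.sdiff_singleton_eq_erase,
          ← Finset.mul_prod_erase Finset.univ _ (Finset.mem_univ i)]
        rw [Nat.factorial_succ, pow_succ]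
        push_cast
        ring
      rw [hP, hli]
      simp only [smul_eq_mul]
      push_cast
      field_simp
    · rw [if_neg h1]
      by_cases h2 : k = Function.update l i (l i - 1)
      · by_cases h3 : l i = 0
        · rw [if_pos h2]
          simp [h3]
        · exfalso
          apply h1
          funext j
          by_cases hj : j = i
          · subst hj
            rw [Function.update_self, h2, Function.update_self]
            omega
          · rw [Function.update_of_ne hj, h2, Function.update_of_ne hj]
      · rw [if_neg h2]
        simp
  -- conclude by linearity
  have hmaps : (I ∘ₗ LinearMap.mulLeft ℂ (z i))
      = (((ρ / (ρ + ℏ) : ℝ)) : ℂ) • (I ∘ₗ LinearMap.mulRight ℂ (z i)) := by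
    apply b.ext
    intro kl
    simp only [LinearMap.comp_apply, LinearMap.smul_apply, LinearMap.mulLeft_apply,
      LinearMap.mulRight_apply, smul_eq_mul, hb]
    exact key kl.1 kl.2
  have hfin := LinearMap.congr_fun hmaps a
  simpa using hfin
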